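/- Let T be a rooted tree with nonnegative edge lengths, root r, and a parameter R > 0. There exists a set S of vertices (breakpoints) containing r such that: (1) every vertex v of T has an ancestor in S at distance at most R from v; and (2) for any two distinct vertices of S lying on a common root-to-leaf path, their distance is more than εR, provided every root-to-leaf path has length at most some finite bound and ε ∈ (0,1); moreover any root-to-leaf path of length ℓ contains at most ⌈ℓ/(εR)⌉ + 1 breakpoints. -/

import Mathlib

section BP

variable {V : Type} (r : V) (p : V → V) (depth : V → ℝ) (R : ℝ)

open Classical in
/-- fuel-based greedy breakpoint ancestor -/
noncomputable def bpFuel : ℕ → V → V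
  | 0, _ => r
  | n+1, v => if v = r then r else
      if R < depth v - depth (bpFuel n (p v)) then v
      else bpFuel n (p v)

open Classical in
/-- the deepest breakpoint ancestor of `v` -/
noncomputable def bpL (hroot : ∀ v, ∃ n, p^[n] v = r) (v : V) : V :=
  bpFuel r p depth R (Nat.find (hroot v)) v

variable (hroot : ∀ v, ∃ n, p^[n] v = r)

open Classical in
lemma bpFuel_succ (n : ℕ) (v : V) : bpFuel r p depth R (n+1) v =
    if v = r then r else
      if R < depth v - depth (bpFuel r p depth R n (p v)) then v
      else bpFuel r p depth R n (p v) := rfl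

open Classical in
lemma bpFuel_step : ∀ n v, p^[n] v = r → bpFuel r p depth R (n+1) v = bpFuel r p depth R n v := by
  intro n
  induction n with
  | zero => intro v hv; simp at hv; subst hv; simp [bpFuel]
  | succ n ih =>
    intro v hv
    by_cases h : v = r
    · subst h; simp [bpFuel]
    · rw [Function.iterate_succ_apply] at hv
      rw [bpFuel_succ r p depth R (n+1) v, if_neg h, ih (p v) hv,
        bpFuel_succ r p depth R n v, if_neg h]

lemma bpFuel_stable (hpr : p r = r) : ∀ n v, p^[n] v = r → ∀ m, n ≤ m →
    bpFuel r p depth R m v = bpFuel r p depth R n v := by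
  intro n v hv m hm
  obtain ⟨k, rfl⟩ := Nat.exists_eq_add_of_le hm
  induction k with
  | zero => rfl
  | succ k ih =>
    rw [← Nat.add_assoc, bpFuel_step r p depth R (n+k) v, ih (by omega)]
    rw [Nat.add_comm, Function.iterate_add_apply, hv, Function.iterate_fixed hpr]

lemma bpL_eq_fuel (hpr : p r = r) (v : V) (n : ℕ) (hv : p^[n] v = r) :
    bpL r p depth R hroot v = bpFuel r p depth R n v := by
  classical
  unfold bpL
  have h1 : p^[Nat.find (hroot v)] v = r := Nat.find_spec (hroot v)
  rcases le_total (Nat.find (hroot v)) n with h | h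
  · rw [bpFuel_stable r p depth R hpr _ v h1 n h]
  · rw [bpFuel_stable r p depth R hpr n v hv _ h]

lemma bpL_root (hpr : p r = r) : bpL r p depth R hroot r = r := by
  rw [bpL_eq_fuel r p depth R hroot hpr r 0 rfl]; rfl

open Classical in
lemma bpL_rec (hpr : p r = r) (v : V) (h : v ≠ r) :
    bpL r p depth R hroot v =
      if R < depth v - depth (bpL r p depth R hroot (p v)) then v
      else bpL r p depth R hroot (p v) := by
  obtain ⟨n, hn⟩ := hroot v
  have hn' : n ≠ 0 := by rintro rfl; exact h hn
  obtain ⟨m, rfl⟩ := Nat.exists_eq_succ_of_ne_zero hn'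
  rw [Function.iterate_succ_apply] at hn
  rw [bpL_eq_fuel r p depth R hroot hpr v (m+1) (by rw [Function.iterate_succ_apply]; exact hn)]
  rw [bpL_eq_fuel r p depth R hroot hpr (p v) m hn]
  rw [bpFuel_succ r p depth R m v, if_neg h]

end BP

/-- Breakpoints: in a finite rooted tree (given by a parent map `p` with root `r`
and a depth function measuring distance from the root, nondecreasing along
parent-to-child edges), for any `R > 0` and `ε ∈ (0,1)` there is a set `S` of
breakpoints containing `r` such that (1) every vertex has an ancestor breakpoint
within distance `R`; (2) any two distinct comparable breakpoints are more than
`εR` apart; and (3) the root-to-`v` path contains at most `⌈depth v/(εR)⌉ + 1`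
breakpoints. -/
theorem stmt_10 {V : Type} [Fintype V] [DecidableEq V]
    (r : V) (p : V → V) (hpr : p r = r)
    (hroot : ∀ v, ∃ n, p^[n] v = r)
    (depth : V → ℝ) (hdr : depth r = 0)
    (hmono : ∀ v, depth (p v) ≤ depth v)
    (R ε : ℝ) (hR : 0 < R) (hε0 : 0 < ε) (hε1 : ε < 1) :
    ∃ S : Finset V, r ∈ S ∧
      (∀ v, ∃ a ∈ S, (∃ n, p^[n] v = a) ∧ depth v - depth a ≤ R) ∧
      (∀ a ∈ S, ∀ b ∈ S, a ≠ b → (∃ n, p^[n] b = a) → ε * R < depth b - depth a) ∧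
      (∀ v, ({a | a ∈ S ∧ ∃ n, p^[n] v = a}.ncard : ℤ) ≤ ⌈depth v / (ε * R)⌉ + 1) := by
  classical
  set L : V → V := bpL r p depth R hroot with hL
  -- basic depth facts
  have depth_iter : ∀ m u, depth (p^[m] u) ≤ depth u := by
    intro m
    induction m with
    | zero => intro u; simp
    | succ m ih =>
      intro u
      rw [Function.iterate_succ_apply]
      exact (ih (p u)).trans (hmono u)
  have depth_nonneg : ∀ u, 0 ≤ depth u := by
    intro u
    obtain ⟨n, hn⟩ := hroot u
    have := depth_iter n u
    rw [hn, hdr] at this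
    exact this
  -- L is idempotent
  have Lfix : ∀ n v, p^[n] v = r → L (L v) = L v := by
    intro n
    induction n with
    | zero =>
      intro v hv; simp at hv
      rw [hv, hL, bpL_root r p depth R hroot hpr, bpL_root r p depth R hroot hpr]
    | succ n ih =>
      intro v hv
      by_cases h : v = r
      · rw [h, hL, bpL_root r p depth R hroot hpr, bpL_root r p depth R hroot hpr]
      · rw [Function.iterate_succ_apply] at hv
        rw [hL]
        rw [bpL_rec r p depth R hroot hpr v h]
        split_ifs with hc
        · rw [bpL_rec r p depth R hroot hpr v h, if_pos hc]
        · exact ih (p v) hv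
  -- L v is an ancestor of v
  have Lanc : ∀ n v, p^[n] v = r → ∃ m, p^[m] v = L v := by
    intro n
    induction n with
    | zero =>
      intro v hv; simp at hv
      exact ⟨0, by simp [hv, hL, bpL_root r p depth R hroot hpr]⟩
    | succ n ih =>
      intro v hv
      by_cases h : v = r
      · exact ⟨0, by simp [h, hL, bpL_root r p depth R hroot hpr]⟩
      · rw [Function.iterate_succ_apply] at hv
        rw [hL, bpL_rec r p depth R hroot hpr v h]
        split_ifs with hc
        · exact ⟨0, rfl⟩
        · obtain ⟨m, hm⟩ := ih (p v) hv
          exact ⟨m + 1, by rw [Function.iterate_succ_apply, hm]⟩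
  -- L v is within distance R
  have Lclose : ∀ n v, p^[n] v = r → depth v - depth (L v) ≤ R := by
    intro n
    induction n with
    | zero =>
      intro v hv; simp at hv
      rw [hv, hL, bpL_root r p depth R hroot hpr]
      simp [hR.le]
    | succ n ih =>
      intro v hv
      by_cases h : v = r
      · rw [h, hL, bpL_root r p depth R hroot hpr]; simp [hR.le]
      · rw [Function.iterate_succ_apply] at hv
        rw [hL, bpL_rec r p depth R hroot hpr v h]
        split_ifs with hc
        · simp [hR.le]
        · linarith [not_lt.mp hc]
  -- L v is the deepest breakpoint ancestor
  have Lmax : ∀ n v, p^[n] v = r → ∀ a, L a = a → (∃ m, p^[m] v = a) →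
      depth a ≤ depth (L v) := by
    intro n
    induction n with
    | zero =>
      intro v hv a ha ⟨m, hm⟩
      simp at hv
      rw [hv, Function.iterate_fixed hpr] at hm
      rw [← hm, hv, hL, bpL_root r p depth R hroot hpr]
    | succ n ih =>
      intro v hv a ha ⟨m, hm⟩
      by_cases h : v = r
      · rw [h, Function.iterate_fixed hpr] at hm
        rw [← hm, h, hL, bpL_root r p depth R hroot hpr]
      · rw [Function.iterate_succ_apply] at hv
        rcases m with _ | m
        · simp at hm
          rw [← hm] at ha
          rw [ha, hm]
        · rw [Function.iterate_succ_apply] at hm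
          rw [hL, bpL_rec r p depth R hroot hpr v h]
          split_ifs with hc
          · subst hm; exact depth_iter (m + 1) v
          · exact ih (p v) hv a ha ⟨m, hm⟩
  -- a vertex fixed by a positive iterate is the root
  have cyc : ∀ (b : V) (m : ℕ), p^[m + 1] b = b → b = r := by
    intro b m hb
    obtain ⟨nb, hnb⟩ := hroot b
    have key : ∀ j, p^[j * (m + 1)] b = b := by
      intro j
      induction j with
      | zero => simp
      | succ j ih => rw [Nat.succ_mul, Function.iterate_add_apply, hb, ih]
    have h1 : nb ≤ nb * (m + 1) := Nat.le_mul_of_pos_right nb (by omega)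
    obtain ⟨k, hk⟩ := Nat.exists_eq_add_of_le h1
    have hkey := key nb
    rw [hk, Nat.add_comm, Function.iterate_add_apply, hnb,
      Function.iterate_fixed hpr] at hkey
    exact hkey.symm
  -- the breakpoint set
  refine ⟨Finset.univ.filter (fun v => L v = v), ?_, ?_, ?_, ?_⟩
  · simp only [Finset.mem_filter, Finset.mem_univ, true_and]
    rw [hL]; exact bpL_root r p depth R hroot hpr
  · intro v
    obtain ⟨n, hn⟩ := hroot v
    refine ⟨L v, ?_, Lanc n v hn, Lclose n v hn⟩
    simp only [Finset.mem_filter, Finset.mem_univ, true_and]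
    exact Lfix n v hn
  · -- separation
    have sep : ∀ a, L a = a → ∀ b, L b = b → a ≠ b → (∃ n, p^[n] b = a) →
        ε * R < depth b - depth a := by
      intro a ha b hb hab ⟨n, hn⟩
      rcases n with _ | n
      · simp at hn; exact absurd hn.symm hab
      · rw [Function.iterate_succ_apply] at hn
        have hbr : b ≠ r := by
          intro hbe
          rw [hbe, hpr, Function.iterate_fixed hpr] at hn
          exact hab (hn.symm.trans hbe.symm)
        have hc : R < depth b - depth (L (p b)) := by
          by_contra hc
          have heq : L b = L (p b) := by
            rw [hL, bpL_rec r p depth R hroot hpr b hbr, if_neg hc]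
          rw [hb] at heq
          obtain ⟨npb, hnpb⟩ := hroot (p b)
          obtain ⟨m, hm⟩ := Lanc npb (p b) hnpb
          rw [← heq] at hm
          have : p^[m + 1] b = b := by rw [Function.iterate_succ_apply, hm]
          exact hbr (cyc b m this)
        obtain ⟨npb, hnpb⟩ := hroot (p b)
        have hda : depth a ≤ depth (L (p b)) := Lmax npb (p b) hnpb a ha ⟨n, hn⟩
        have hεR : ε * R < R := by nlinarith
        linarith
    intro a ha b hb hab hanc
    simp only [Finset.mem_filter, Finset.mem_univ, true_and] at ha hb
    exact sep a ha b hb hab hanc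
  · -- counting
    intro v
    have sep : ∀ a, L a = a → ∀ b, L b = b → a ≠ b → (∃ n, p^[n] b = a) →
        ε * R < depth b - depth a := by
      intro a ha b hb hab ⟨n, hn⟩
      rcases n with _ | n
      · simp at hn; exact absurd hn.symm hab
      · rw [Function.iterate_succ_apply] at hn
        have hbr : b ≠ r := by
          intro hbe
          rw [hbe, hpr, Function.iterate_fixed hpr] at hn
          exact hab (hn.symm.trans hbe.symm)
        have hc : R < depth b - depth (L (p b)) := by
          by_contra hc
          have heq : L b = L (p b) := by
            rw [hL, bpL_rec r p depth R hroot hpr b hbr, if_neg hc]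
          rw [hb] at heq
          obtain ⟨npb, hnpb⟩ := hroot (p b)
          obtain ⟨m, hm⟩ := Lanc npb (p b) hnpb
          rw [← heq] at hm
          have : p^[m + 1] b = b := by rw [Function.iterate_succ_apply, hm]
          exact hbr (cyc b m this)
        obtain ⟨npb, hnpb⟩ := hroot (p b)
        have hda : depth a ≤ depth (L (p b)) := Lmax npb (p b) hnpb a ha ⟨n, hn⟩
        have hεR : ε * R < R := by nlinarith
        linarith
    have hεR : 0 < ε * R := mul_pos hε0 hR
    set A : Finset V := Finset.univ.filter
      (fun a => L a = a ∧ ∃ n, p^[n] v = a) with hA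
    have hset : {a | a ∈ Finset.univ.filter (fun v => L v = v) ∧ ∃ n, p^[n] v = a}
        = (A : Set V) := by
      ext a
      simp [hA, Finset.mem_filter]
    rw [hset, Set.ncard_coe_finset]
    have hcard : A.card ≤ (Finset.Icc (0 : ℤ) ⌊depth v / (ε * R)⌋).card := by
      apply Finset.card_le_card_of_injOn (fun a => ⌊depth a / (ε * R)⌋)
      · intro a haA
        simp only [Finset.mem_coe, hA, Finset.mem_filter, Finset.mem_univ, true_and] at haA
        obtain ⟨ha, n, hn⟩ := haA
        simp only [Finset.coe_Icc, Set.mem_Icc]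
        constructor
        · exact Int.floor_nonneg.mpr (div_nonneg (depth_nonneg a) hεR.le)
        · apply Int.floor_le_floor
          apply div_le_div_of_nonneg_right _ hεR.le
          · subst hn; exact depth_iter n v
      · intro a haA b hbA hfab
        simp only [] at hfab
        by_contra hab
        simp only [Finset.mem_coe, hA, Finset.mem_filter, Finset.mem_univ, true_and] at haA hbA
        obtain ⟨ha, na, hna⟩ := haA
        obtain ⟨hb, nb, hnb⟩ := hbA
        have comp : (∃ k, p^[k] b = a) ∨ (∃ k, p^[k] a = b) := by
          rcases le_total na nb with h | h
          · right
            obtain ⟨k, hk⟩ := Nat.exists_eq_add_of_le h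
            refine ⟨k, ?_⟩
            rw [← hna, ← Function.iterate_add_apply, Nat.add_comm, ← hk, hnb]
          · left
            obtain ⟨k, hk⟩ := Nat.exists_eq_add_of_le h
            refine ⟨k, ?_⟩
            rw [← hnb, ← Function.iterate_add_apply, Nat.add_comm, ← hk, hna]
        have hfloor : ∀ x y : V, ε * R < depth y - depth x →
            ⌊depth x / (ε * R)⌋ + 1 ≤ ⌊depth y / (ε * R)⌋ := by
          intro x y hxy
          have : depth x / (ε * R) + 1 ≤ depth y / (ε * R) := by
            rw [div_add' _ _ _ hεR.ne']
            apply div_le_div_of_nonneg_right _ hεR.le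
            linarith
          calc ⌊depth x / (ε * R)⌋ + 1 = ⌊depth x / (ε * R) + 1⌋ := by
                rw [Int.floor_add_one]
            _ ≤ ⌊depth y / (ε * R)⌋ := Int.floor_le_floor this
        rcases comp with ⟨k, hk⟩ | ⟨k, hk⟩
        · have := hfloor a b (sep a ha b hb hab ⟨k, hk⟩)
          omega
        · have := hfloor b a (sep b hb a ha (Ne.symm hab) ⟨k, hk⟩)
          omega
    have hIcc : (Finset.Icc (0 : ℤ) ⌊depth v / (ε * R)⌋).card
        = (⌊depth v / (ε * R)⌋ + 1).toNat := by
      rw [Int.card_Icc]; ring_nf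
    have hfl0 : (0 : ℤ) ≤ ⌊depth v / (ε * R)⌋ :=
      Int.floor_nonneg.mpr (div_nonneg (depth_nonneg v) hεR.le)
    have : (A.card : ℤ) ≤ ⌊depth v / (ε * R)⌋ + 1 := by
      rw [hIcc] at hcard
      have := Int.toNat_of_nonneg (by omega : (0:ℤ) ≤ ⌊depth v / (ε * R)⌋ + 1)
      omega
    have := Int.floor_le_ceil (depth v / (ε * R))
    omega
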